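/- For the globally coupled identical phase oscillator system, all pairwise phase differences are bounded along every trajectory: if θ : ℝ → ℝ^N solves θ̇_i(t) = ω + K·Σ_{j=1}^N g(θ_i(t) − θ_j(t)), then for every pair of indices i, j one has |θ_i(t) − θ_j(t)| ≤ |θ_i(0) − θ_j(0)| + 2π for all t ∈ ℝ. -/

import Mathlib

open Set Function

/-- The vector field of the globally coupled oscillator system. -/
noncomputable def oscVF (N : ℕ) (ω K : ℝ) (g : ℝ → ℝ) : (Fin N → ℝ) → (Fin N → ℝ) :=
  fun x i => ω + K * ∑ j : Fin N, g (x i - x j)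

lemma osc_lipschitz (N : ℕ) (ω K : ℝ) (g : ℝ → ℝ)
    (hg : ContDiff ℝ 1 g) (hper : Function.Periodic g (2 * Real.pi)) :
    ∃ C : NNReal, LipschitzWith C (oscVF N ω K g) := by
  have hdg : Continuous (deriv g) := hg.continuous_deriv le_rfl
  have hdper : Function.Periodic (deriv g) (2 * Real.pi) := by
    intro x
    have e : (fun y => g (y + 2 * Real.pi)) = g := funext fun y => hper y
    calc deriv g (x + 2 * Real.pi) = deriv (fun y => g (y + 2 * Real.pi)) x := by
          rw [deriv_comp_add_const]
      _ = deriv g x := by rw [e]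
  obtain ⟨Cg, hCg⟩ : ∃ C : ℝ, ∀ x, ‖deriv g x‖ ≤ C := by
    have hb := hdper.isBounded_of_continuous (by positivity) hdg
    rw [isBounded_iff_forall_norm_le] at hb
    obtain ⟨C, hC⟩ := hb
    exact ⟨C, fun x => hC _ (mem_range_self x)⟩
  set Lg : NNReal := Real.toNNReal Cg with hLg
  have hglip : LipschitzWith Lg g := by
    apply lipschitzWith_of_nnnorm_deriv_le (hg.differentiable one_ne_zero)
    intro x
    rw [← NNReal.coe_le_coe, coe_nnnorm]
    exact le_trans (hCg x) (Real.le_coe_toNNReal Cg)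
  have hgd : ∀ a b : ℝ, |g a - g b| ≤ (Lg : ℝ) * |a - b| := by
    intro a b
    have := hglip.dist_le_mul a b
    rwa [Real.dist_eq, Real.dist_eq] at this
  refine ⟨‖K‖₊ * (2 * N * Lg), LipschitzWith.of_dist_le_mul fun x y => ?_⟩
  have hcd : ((‖K‖₊ * (2 * N * Lg) : NNReal) : ℝ) = |K| * (2 * N * Lg) := by
    push_cast [Real.norm_eq_abs]; ring
  rw [hcd]
  have hd0 : (0:ℝ) ≤ dist x y := dist_nonneg
  rw [dist_pi_le_iff (by positivity)]
  intro i
  rw [Real.dist_eq]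
  have h1 : oscVF N ω K g x i - oscVF N ω K g y i
      = K * ∑ j : Fin N, (g (x i - x j) - g (y i - y j)) := by
    simp only [oscVF]
    rw [add_sub_add_left_eq_sub, ← mul_sub, ← Finset.sum_sub_distrib]
  rw [h1, abs_mul]
  have h2 : |∑ j : Fin N, (g (x i - x j) - g (y i - y j))|
      ≤ ∑ j : Fin N, ((Lg : ℝ) * (2 * dist x y)) := by
    refine le_trans (Finset.abs_sum_le_sum_abs _ _) (Finset.sum_le_sum fun j _ => ?_)
    refine le_trans (hgd _ _) ?_
    have hxi := dist_le_pi_dist x y i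
    have hxj := dist_le_pi_dist x y j
    rw [Real.dist_eq] at hxi hxj
    have : |x i - x j - (y i - y j)| ≤ |x i - y i| + |x j - y j| := by
      rw [show x i - x j - (y i - y j) = (x i - y i) - (x j - y j) by ring]
      exact abs_sub _ _
    have hLg0 : (0:ℝ) ≤ Lg := Lg.coe_nonneg
    nlinarith
  calc |K| * |∑ j : Fin N, (g (x i - x j) - g (y i - y j))|
      ≤ |K| * (N * ((Lg : ℝ) * (2 * dist x y))) := by
        rw [Finset.sum_const, Finset.card_univ, Fintype.card_fin, nsmul_eq_mul] at h2
        have := abs_nonneg K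
        nlinarith
    _ = |K| * (2 * N * Lg) * dist x y := by ring

lemma ode_unique_global {E : Type*} [NormedAddCommGroup E] [NormedSpace ℝ E]
    {v : E → E} {C : NNReal} (hv : LipschitzWith C v) {f h : ℝ → E}
    (hf : ∀ t, HasDerivAt f (v (f t)) t) (hh : ∀ t, HasDerivAt h (v (h t)) t)
    {t₀ : ℝ} (heq : f t₀ = h t₀) : ∀ t, f t = h t := by
  intro t
  have h1 : min t₀ t - 1 < t₀ := by have := min_le_left t₀ t; linarith
  have h2 : t₀ < max t₀ t + 1 := by have := le_max_left t₀ t; linarith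
  have h3 : min t₀ t - 1 < t := by have := min_le_right t₀ t; linarith
  have h4 : t < max t₀ t + 1 := by have := le_max_right t₀ t; linarith
  exact ODE_solution_unique_of_mem_Ioo (v := fun _ => v) (s := fun _ => Set.univ)
    (fun _ _ => hv.lipschitzOnWith) (t₀ := t₀) (a := min t₀ t - 1) (b := max t₀ t + 1)
    ⟨h1, h2⟩ (fun u _ => ⟨hf u, trivial⟩) (fun u _ => ⟨hh u, trivial⟩) heq ⟨h3, h4⟩

lemma osc_diff_const (N : ℕ) (ω K : ℝ) (g : ℝ → ℝ)
    (hg : ContDiff ℝ 1 g) (hper : Function.Periodic g (2 * Real.pi))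
    (θ : ℝ → Fin N → ℝ)
    (hθ : ∀ t : ℝ, ∀ i : Fin N,
      HasDerivAt (fun s => θ s i) (ω + K * ∑ j : Fin N, g (θ t i - θ t j)) t)
    (i j : Fin N) (hij : i ≠ j) (s : ℝ) (m : ℤ)
    (hs : θ s i - θ s j = 2 * Real.pi * m) :
    ∀ t, θ t i - θ t j = 2 * Real.pi * m := by
  obtain ⟨C, hC⟩ := osc_lipschitz N ω K g hg hper
  set σ : Equiv.Perm (Fin N) := Equiv.swap i j with hσ
  set nn : Fin N → ℤ := fun l => if l = i then m else if l = j then -m else 0 with hnn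
  set φ : ℝ → Fin N → ℝ := fun t l => θ t (σ l) + (nn l : ℝ) * (2 * Real.pi) with hφ
  have gshift : ∀ (x : ℝ) (n : ℤ), g (x + n * (2 * Real.pi)) = g x := by
    intro x n
    exact (hper.int_mul n) x
  have hnnσ : ∀ p, nn (σ p) = - nn p := by
    intro p
    by_cases hp : p = i
    · simp [hnn, hσ, hp, Equiv.swap_apply_left, hij.symm]
    · by_cases hq : p = j
      · simp [hnn, hσ, hq, Equiv.swap_apply_right, hij, Ne.symm hij]
      · simp [hnn, hσ, Equiv.swap_apply_of_ne_of_ne hp hq, hp, hq]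
  have hsum : ∀ t l, (∑ p : Fin N, g (φ t l - φ t p)) = ∑ p : Fin N, g (θ t (σ l) - θ t p) := by
    intro t l
    rw [← Equiv.sum_comp σ (fun p => g (φ t l - φ t p))]
    refine Finset.sum_congr rfl fun p _ => ?_
    have hσσ : σ (σ p) = p := Equiv.swap_apply_self i j p
    rw [hφ]
    simp only [hσσ, hnnσ]
    rw [show θ t (σ l) + (nn l : ℝ) * (2 * Real.pi) - (θ t p + (↑(-nn p) : ℝ) * (2 * Real.pi))
        = (θ t (σ l) - θ t p) + ((nn l + nn p : ℤ) : ℝ) * (2 * Real.pi) by push_cast; ring]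
    exact gshift _ _
  have hφ' : ∀ t l, HasDerivAt (fun u => φ u l) (oscVF N ω K g (φ t) l) t := by
    intro t l
    have := (hθ t (σ l)).add_const ((nn l : ℝ) * (2 * Real.pi))
    have heq : oscVF N ω K g (φ t) l = ω + K * ∑ p : Fin N, g (θ t (σ l) - θ t p) := by
      rw [oscVF, hsum]
    rw [heq]
    exact this
  have hθ' : ∀ t l, HasDerivAt (fun u => θ u l) (oscVF N ω K g (θ t) l) t := fun t l => hθ t l
  have hφθ : ∀ t, HasDerivAt φ (oscVF N ω K g (φ t)) t := by
    intro t
    exact hasDerivAt_pi.mpr (fun l => hφ' t l)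
  have hθθ : ∀ t, HasDerivAt θ (oscVF N ω K g (θ t)) t := by
    intro t
    exact hasDerivAt_pi.mpr (fun l => hθ' t l)
  have hinit : φ s = θ s := by
    funext l
    rw [hφ]
    by_cases hp : l = i
    · simp only [hp, hσ, Equiv.swap_apply_left, hnn, if_pos rfl]
      push_cast; linarith
    · by_cases hq : l = j
      · simp only [hq, hσ, Equiv.swap_apply_right, hnn, if_neg hij.symm, if_pos rfl]
        push_cast; linarith
      · simp [hσ, Equiv.swap_apply_of_ne_of_ne hp hq, hnn, hp, hq]
  have := ode_unique_global hC hφθ hθθ hinit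
  intro t
  have h1 : φ t i = θ t i := by rw [this t]
  rw [hφ] at h1
  simp only [hσ, Equiv.swap_apply_left, hnn, if_pos rfl] at h1
  push_cast at h1
  linarith

/-- For the globally coupled identical phase oscillator system, all pairwise phase
differences are bounded along every trajectory: if `θ` solves
`θ̇ᵢ = ω + K ∑ⱼ g (θᵢ - θⱼ)`, then `|θᵢ(t) - θⱼ(t)| ≤ |θᵢ(0) - θⱼ(0)| + 2π` for all `t`. -/
theorem global_coupling_phase_differences_bounded
    (N : ℕ) (hN : 1 ≤ N) (ω K : ℝ) (g : ℝ → ℝ)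
    (hg : ContDiff ℝ 1 g) (hper : Function.Periodic g (2 * Real.pi))
    (θ : ℝ → Fin N → ℝ)
    (hθ : ∀ t : ℝ, ∀ i : Fin N,
      HasDerivAt (fun s => θ s i) (ω + K * ∑ j : Fin N, g (θ t i - θ t j)) t)
    (i j : Fin N) :
    ∀ t : ℝ, |θ t i - θ t j| ≤ |θ 0 i - θ 0 j| + 2 * Real.pi := by
  have hπ : (0:ℝ) < 2 * Real.pi := by positivity
  by_cases hij : i = j
  · intro t; subst hij; simp; positivity
  set u : ℝ → ℝ := fun t => θ t i - θ t j with hu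
  have hucont : Continuous u := by
    have hi : Continuous fun t => θ t i :=
      continuous_iff_continuousAt.mpr fun t => (hθ t i).continuousAt
    have hj : Continuous fun t => θ t j :=
      continuous_iff_continuousAt.mpr fun t => (hθ t j).continuousAt
    exact hi.sub hj
  by_cases hex : ∃ (s : ℝ) (m : ℤ), θ s i - θ s j = 2 * Real.pi * m
  · obtain ⟨s, m, hs⟩ := hex
    have hconst := osc_diff_const N ω K g hg hper θ hθ i j hij s m hs
    intro t
    rw [hconst t, ← hconst 0]
    linarith [abs_nonneg (θ 0 i - θ 0 j)]
  · push_neg at hex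
    intro t
    have hkey : |u t - u 0| ≤ 2 * Real.pi := by
      by_contra hcon
      push_neg at hcon
      rw [lt_abs] at hcon
      rcases hcon with hgt | hlt
      · -- u t > u 0 + 2π : ceiling multiple between
        obtain ⟨m, h1, h2'⟩ : ∃ m : ℤ, u 0 ≤ 2 * Real.pi * m ∧ 2 * Real.pi * m ≤ u 0 + 2 * Real.pi := by
          refine ⟨⌈u 0 / (2 * Real.pi)⌉, ?_, ?_⟩
          · have h := Int.le_ceil (u 0 / (2 * Real.pi))
            have h' := mul_le_mul_of_nonneg_right h (le_of_lt hπ)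
            rw [div_mul_cancel₀ _ (ne_of_gt hπ)] at h'
            linarith
          · have h := Int.ceil_lt_add_one (u 0 / (2 * Real.pi))
            have h' := mul_lt_mul_of_pos_right h hπ
            rw [add_mul, one_mul, div_mul_cancel₀ _ (ne_of_gt hπ)] at h'
            linarith
        have h2 : 2 * Real.pi * m ≤ u t := by linarith
        have hmem : (2 * Real.pi * m) ∈ Set.uIcc (u 0) (u t) := by
          rw [Set.uIcc_of_le (by linarith)]
          exact ⟨h1, h2⟩
        obtain ⟨s, _, hs⟩ := intermediate_value_uIcc (hucont.continuousOn) hmem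
        exact hex s m hs
      · -- u t < u 0 - 2π : floor multiple between
        obtain ⟨m, h1, h2'⟩ : ∃ m : ℤ, 2 * Real.pi * m ≤ u 0 ∧ u 0 - 2 * Real.pi ≤ 2 * Real.pi * m := by
          refine ⟨⌊u 0 / (2 * Real.pi)⌋, ?_, ?_⟩
          · have h := Int.floor_le (u 0 / (2 * Real.pi))
            have h' := mul_le_mul_of_nonneg_right h (le_of_lt hπ)
            rw [div_mul_cancel₀ _ (ne_of_gt hπ)] at h'
            linarith
          · have h := Int.lt_floor_add_one (u 0 / (2 * Real.pi))
            have h' := mul_lt_mul_of_pos_right h hπ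
            rw [add_mul, one_mul, div_mul_cancel₀ _ (ne_of_gt hπ)] at h'
            linarith
        have h2 : u t ≤ 2 * Real.pi * m := by linarith
        have hmem : (2 * Real.pi * m) ∈ Set.uIcc (u 0) (u t) := by
          rw [Set.uIcc_of_ge (by linarith)]
          exact ⟨h2, h1⟩
        obtain ⟨s, _, hs⟩ := intermediate_value_uIcc (hucont.continuousOn) hmem
        exact hex s m hs
    calc |u t| ≤ |u 0| + |u t - u 0| := by
          have := abs_sub_abs_le_abs_sub (u t) (u 0)
          linarith [abs_sub_comm (u t) (u 0)]
      _ ≤ |u 0| + 2 * Real.pi := by linarith
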